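/- Let ν > 1 and 0 ≤ b < a. Then lim_{t→∞} t^{ν+1} (I(t) − C_ν/t^ν) = −ν C_{ν+1}; that is, I(t) = C_ν/t^ν − ν C_{ν+1}/t^{ν+1} + o(t^{-ν-1}) as t → ∞, where C_{ν+1} = (a^{2ν+2} − b^{2ν+2})/(2^{ν+1} Γ(ν+2)). -/

import Mathlib

open MeasureTheory Filter

/-- `F ν x t = (x^{2ν}/(2^ν Γ(ν))) ∫_t^∞ s^{-(ν+1)} exp(-x²/(2s)) ds`. -/
noncomputable def F (ν x t : ℝ) : ℝ :=
  (x ^ (2 * ν) / (2 ^ ν * Real.Gamma ν)) *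
    ∫ s in Set.Ioi t, s ^ (-(ν + 1)) * Real.exp (-x ^ 2 / (2 * s))

namespace Stmt16Aux

lemma exp_approx {y : ℝ} (hy : 0 ≤ y) : |Real.exp (-y) - (1 - y)| ≤ y ^ 2 / 2 := by
  have h1 : 1 - y ≤ Real.exp (-y) := by
    have := Real.add_one_le_exp (-y); linarith
  have hq : 1 + y + y ^ 2 / 2 ≤ Real.exp y := Real.quadratic_le_exp_of_nonneg hy
  have e1 : Real.exp (-y) * Real.exp y = 1 := by
    rw [← Real.exp_add]; simp
  have e2 : (0:ℝ) < Real.exp (-y) := Real.exp_pos _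
  have h2 : Real.exp (-y) ≤ 1 - y + y ^ 2 / 2 := by
    nlinarith [mul_le_mul_of_nonneg_left hq e2.le, sq_nonneg (y^2), sq_nonneg y]
  rw [abs_le]; constructor <;> nlinarith

lemma integral_rpow_Ioi {p q t : ℝ} (hp : 0 < p) (hq : q = -(p+1)) (ht : 0 < t) :
    ∫ s in Set.Ioi t, s ^ q = t ^ (-p) / p := by
  subst hq
  rw [integral_Ioi_rpow_of_lt (by linarith) ht, show -(p+1)+1 = -p by ring, neg_div_neg_eq]

lemma integrable_rpow_Ioi {q t : ℝ} (hq : q < -1) (ht : 0 < t) :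
    IntegrableOn (fun s : ℝ => s ^ q) (Set.Ioi t) :=
  integrableOn_Ioi_rpow_of_lt hq ht

lemma F_eq (ν x : ℝ) (hν : 1 < ν) (hx : 0 ≤ x) {t : ℝ} (ht : 0 < t) :
    ∃ err : ℝ,
      |err| ≤ x ^ (2*ν) / (2^ν * Real.Gamma ν) * (x^4/8) / (ν+2) * t ^ (-(ν+2)) ∧
      F ν x t = x ^ (2*ν) / (2^ν * Real.Gamma (ν+1)) * t ^ (-ν)
        - ν * (x ^ (2*ν+2) / (2^(ν+1) * Real.Gamma (ν+2))) * t ^ (-(ν+1)) + err := by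
  have hν0 : (0:ℝ) < ν := by linarith
  have hΓ : 0 < Real.Gamma ν := Real.Gamma_pos_of_pos hν0
  set c : ℝ := x ^ (2*ν) / (2^ν * Real.Gamma ν) with hc_def
  have hc : 0 ≤ c := by positivity
  set f : ℝ → ℝ := fun s => s ^ (-(ν+1)) * Real.exp (-x ^ 2 / (2 * s)) with hf_def
  set g : ℝ → ℝ := fun s =>
    s ^ (-(ν+1)) * (Real.exp (-(x ^ 2 / (2 * s))) - (1 - x ^ 2 / (2 * s))) with hg_def
  -- integrabilities
  have hi1 : IntegrableOn (fun s : ℝ => s ^ (-(ν+1))) (Set.Ioi t) :=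
    integrable_rpow_Ioi (by linarith) ht
  have hi2 : IntegrableOn (fun s : ℝ => s ^ (-(ν+2))) (Set.Ioi t) :=
    integrable_rpow_Ioi (by linarith) ht
  have hi3 : IntegrableOn (fun s : ℝ => s ^ (-(ν+3))) (Set.Ioi t) :=
    integrable_rpow_Ioi (by linarith) ht
  have hconts : ContinuousOn f (Set.Ioi t) := by
    apply ContinuousOn.mul
    · intro s hs
      exact (Real.continuousAt_rpow_const s _
        (Or.inl (ne_of_gt (ht.trans hs)))).continuousWithinAt
    · apply Real.continuous_exp.comp_continuousOn
      apply ContinuousOn.div continuousOn_const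
        ((continuous_const.mul continuous_id).continuousOn)
      intro s hs
      exact mul_ne_zero two_ne_zero (ne_of_gt (ht.trans hs))
  have hf_int : IntegrableOn f (Set.Ioi t) := by
    apply Integrable.mono hi1 (hconts.aestronglyMeasurable measurableSet_Ioi)
    filter_upwards [ae_restrict_mem measurableSet_Ioi] with s hs
    have hs0 : 0 < s := ht.trans hs
    have hr : (0:ℝ) ≤ s ^ (-(ν+1)) := (Real.rpow_pos_of_pos hs0 _).le
    have he : Real.exp (-x ^ 2 / (2 * s)) ≤ 1 := by
      apply Real.exp_le_one_iff.mpr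
      exact div_nonpos_of_nonpos_of_nonneg (neg_nonpos.mpr (by positivity)) (by positivity)
    have hfs : (0:ℝ) ≤ f s := mul_nonneg hr (Real.exp_pos _).le
    rw [Real.norm_eq_abs, Real.norm_eq_abs, abs_of_nonneg hr, abs_of_nonneg hfs]
    calc f s = s ^ (-(ν+1)) * Real.exp (-x ^ 2 / (2 * s)) := rfl
    _ ≤ s ^ (-(ν+1)) * 1 := by
        exact mul_le_mul_of_nonneg_left he hr
    _ = s ^ (-(ν+1)) := mul_one _
  -- pointwise identity on Ioi t : f - f1 + f2 = g
  have hEq : Set.EqOn (fun s => f s - s ^ (-(ν+1)) + x^2/2 * s ^ (-(ν+2))) g (Set.Ioi t) := by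
    intro s hs
    have hs0 : 0 < s := ht.trans hs
    have hkey : x^2/2 * s ^ (-(ν+2)) = s ^ (-(ν+1)) * (x ^ 2 / (2 * s)) := by
      rw [show -(ν+2) = -(ν+1) + (-1) by ring, Real.rpow_add hs0, Real.rpow_neg_one]
      field_simp
    simp only [hf_def, hg_def, neg_div]
    rw [hkey]; ring
  have hi2c : IntegrableOn (fun s : ℝ => x^2/2 * s ^ (-(ν+2))) (Set.Ioi t) :=
    hi2.const_mul _
  have hcomb : IntegrableOn
      (fun s => f s - s ^ (-(ν+1)) + x^2/2 * s ^ (-(ν+2))) (Set.Ioi t) :=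
    (hf_int.sub hi1).add hi2c
  have hg_int : IntegrableOn g (Set.Ioi t) :=
    hcomb.congr_fun hEq measurableSet_Ioi
  -- pointwise bound on g
  have hgb : ∀ s ∈ Set.Ioi t, ‖g s‖ ≤ x^4/8 * s ^ (-(ν+3)) := by
    intro s hs
    have hs0 : 0 < s := ht.trans hs
    have hy : 0 ≤ x ^ 2 / (2 * s) := by positivity
    have hr : (0:ℝ) < s ^ (-(ν+1)) := Real.rpow_pos_of_pos hs0 _
    have hb := exp_approx hy
    have h1 : ‖g s‖ = s ^ (-(ν+1)) * |Real.exp (-(x ^ 2 / (2 * s))) - (1 - x ^ 2 / (2 * s))| := by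
      rw [Real.norm_eq_abs, hg_def]
      rw [abs_mul, abs_of_nonneg hr.le]
    have h2' : s ^ ((-2):ℝ) = (s^2)⁻¹ := by
      rw [show ((-2):ℝ) = -(2:ℝ) by norm_num, Real.rpow_neg hs0.le, Real.rpow_two]
    have h2 : s ^ (-(ν+3)) = s ^ (-(ν+1)) * (s^2)⁻¹ := by
      rw [show -(ν+3) = -(ν+1) + (-2:ℝ) by ring, Real.rpow_add hs0, h2']
    rw [h1, h2]
    calc s ^ (-(ν+1)) * |Real.exp (-(x ^ 2 / (2 * s))) - (1 - x ^ 2 / (2 * s))|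
        ≤ s ^ (-(ν+1)) * ((x ^ 2 / (2 * s))^2 / 2) := mul_le_mul_of_nonneg_left hb hr.le
      _ = x^4/8 * (s ^ (-(ν+1)) * (s^2)⁻¹) := by
          field_simp
          ring
  -- integral bound on g
  have hgint_bound : |∫ s in Set.Ioi t, g s| ≤ x^4/8 * (t ^ (-(ν+2)) / (ν+2)) := by
    have hbint : IntegrableOn (fun s : ℝ => x^4/8 * s ^ (-(ν+3))) (Set.Ioi t) :=
      hi3.const_mul _
    have key : ‖∫ s in Set.Ioi t, g s‖ ≤ ∫ s in Set.Ioi t, x^4/8 * s ^ (-(ν+3)) :=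
      norm_integral_le_of_norm_le hbint (by
        filter_upwards [ae_restrict_mem measurableSet_Ioi] with s hs
        exact hgb s hs)
    rw [Real.norm_eq_abs] at key
    refine key.trans_eq ?_
    rw [integral_const_mul, integral_rpow_Ioi (by linarith : (0:ℝ) < ν + 2) (by ring) ht]
  -- compute the integral of f
  have hsplit : ∫ s in Set.Ioi t, g s =
      (∫ s in Set.Ioi t, f s) - (∫ s in Set.Ioi t, s ^ (-(ν+1)))
        + x^2/2 * ∫ s in Set.Ioi t, s ^ (-(ν+2)) := by
    calc ∫ s in Set.Ioi t, g s
        = ∫ s in Set.Ioi t, (f s - s ^ (-(ν+1)) + x^2/2 * s ^ (-(ν+2))) :=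
          (setIntegral_congr_fun measurableSet_Ioi hEq).symm
      _ = (∫ s in Set.Ioi t, (f s - s ^ (-(ν+1))))
            + ∫ s in Set.Ioi t, x^2/2 * s ^ (-(ν+2)) :=
          integral_add (hf_int.sub hi1) hi2c
      _ = ((∫ s in Set.Ioi t, f s) - ∫ s in Set.Ioi t, s ^ (-(ν+1)))
            + x^2/2 * ∫ s in Set.Ioi t, s ^ (-(ν+2)) := by
          rw [integral_sub hf_int hi1, integral_const_mul]
      _ = (∫ s in Set.Ioi t, f s) - (∫ s in Set.Ioi t, s ^ (-(ν+1)))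
            + x^2/2 * ∫ s in Set.Ioi t, s ^ (-(ν+2)) := by ring
  have hI1 : ∫ s in Set.Ioi t, s ^ (-(ν+1)) = t ^ (-ν) / ν :=
    integral_rpow_Ioi hν0 (by ring) ht
  have hI2 : ∫ s in Set.Ioi t, s ^ (-(ν+2)) = t ^ (-(ν+1)) / (ν+1) :=
    integral_rpow_Ioi (by linarith) (by ring) ht
  refine ⟨c * ∫ s in Set.Ioi t, g s, ?_, ?_⟩
  · rw [abs_mul, abs_of_nonneg hc]
    calc c * |∫ s in Set.Ioi t, g s| ≤ c * (x^4/8 * (t ^ (-(ν+2)) / (ν+2))) :=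
        mul_le_mul_of_nonneg_left hgint_bound hc
      _ = c * (x^4/8) / (ν+2) * t ^ (-(ν+2)) := by ring
  · have hF : F ν x t = c * ∫ s in Set.Ioi t, f s := rfl
    have hfint_eq : ∫ s in Set.Ioi t, f s =
        t ^ (-ν) / ν - x^2/2 * (t ^ (-(ν+1)) / (ν+1)) + ∫ s in Set.Ioi t, g s := by
      rw [hsplit, hI1, hI2]; ring
    rw [hF, hfint_eq]
    -- constants
    have hΓ1 : Real.Gamma (ν+1) = ν * Real.Gamma ν := Real.Gamma_add_one hν0.ne'
    have hΓ2 : Real.Gamma (ν+2) = (ν+1) * (ν * Real.Gamma ν) := by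
      rw [show ν+2 = (ν+1)+1 by ring, Real.Gamma_add_one (by linarith), hΓ1]
    have h2p : (2:ℝ)^(ν+1) = 2^ν * 2 := Real.rpow_add_one two_ne_zero ν
    have hxp : x ^ (2*ν+2) = x ^ (2*ν) * x ^ 2 := by
      rw [Real.rpow_add' hx (by linarith : 2*ν+2 ≠ 0), Real.rpow_two]
    rw [hΓ1, hΓ2, h2p, hxp, hc_def]
    have h2ν : (0:ℝ) < 2^ν := by positivity
    field_simp

lemma tendsto_A (ν x : ℝ) (hν : 1 < ν) (hx : 0 ≤ x) :
    Tendsto (fun t : ℝ =>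
        t ^ (ν+1) * (F ν x t - x ^ (2*ν) / (2^ν * Real.Gamma (ν+1)) * t ^ (-ν)))
      atTop (nhds (-(ν * (x ^ (2*ν+2) / (2^(ν+1) * Real.Gamma (ν+2)))))) := by
  rw [← tendsto_sub_nhds_zero_iff]
  apply squeeze_zero_norm'
    (a := fun t : ℝ => x ^ (2*ν) / (2^ν * Real.Gamma ν) * (x^4/8) / (ν+2) * t⁻¹)
  · filter_upwards [eventually_gt_atTop (0:ℝ)] with t ht
    obtain ⟨err, herr, heq⟩ := F_eq ν x hν hx ht
    have h1 : t ^ (ν+1) * t ^ (-(ν+1)) = 1 := by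
      rw [← Real.rpow_add ht, show ν+1 + -(ν+1) = 0 by ring, Real.rpow_zero]
    have h2 : t ^ (ν+1) * t ^ (-(ν+2)) = t⁻¹ := by
      rw [← Real.rpow_add ht, show ν+1 + -(ν+2) = -1 by ring, Real.rpow_neg_one]
    have key : t ^ (ν+1) * (F ν x t
          - x ^ (2*ν) / (2^ν * Real.Gamma (ν+1)) * t ^ (-ν))
        - -(ν * (x ^ (2*ν+2) / (2^(ν+1) * Real.Gamma (ν+2))))
        = t ^ (ν+1) * err := by
      rw [heq]
      linear_combination (-(ν * (x ^ (2*ν+2) / (2^(ν+1) * Real.Gamma (ν+2))))) * h1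
    have htp : (0:ℝ) ≤ t ^ (ν+1) := (Real.rpow_pos_of_pos ht _).le
    rw [key, Real.norm_eq_abs, abs_mul, abs_of_nonneg htp]
    calc t ^ (ν+1) * |err|
        ≤ t ^ (ν+1) * (x ^ (2*ν) / (2^ν * Real.Gamma ν) * (x^4/8) / (ν+2)
            * t ^ (-(ν+2))) := mul_le_mul_of_nonneg_left herr htp
      _ = x ^ (2*ν) / (2^ν * Real.Gamma ν) * (x^4/8) / (ν+2)
            * (t ^ (ν+1) * t ^ (-(ν+2))) := by ring
      _ = x ^ (2*ν) / (2^ν * Real.Gamma ν) * (x^4/8) / (ν+2) * t⁻¹ := by rw [h2]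
  · have := tendsto_inv_atTop_zero.const_mul
      (x ^ (2*ν) / (2^ν * Real.Gamma ν) * (x^4/8) / (ν+2))
    rwa [mul_zero] at this

lemma tendsto_F_zero (ν x : ℝ) (hν : 1 < ν) (hx : 0 ≤ x) :
    Tendsto (fun t : ℝ => F ν x t) atTop (nhds 0) := by
  have hA := tendsto_A ν x hν hx
  have h1 : Tendsto (fun t : ℝ =>
      x ^ (2*ν) / (2^ν * Real.Gamma (ν+1)) * t ^ (-ν)) atTop (nhds 0) := by
    simpa using (tendsto_rpow_neg_atTop (by linarith : (0:ℝ) < ν)).const_mul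
      (x ^ (2*ν) / (2^ν * Real.Gamma (ν+1)))
  have h2 : Tendsto (fun t : ℝ => t ^ (-(ν+1)) *
      (t ^ (ν+1) * (F ν x t - x ^ (2*ν) / (2^ν * Real.Gamma (ν+1)) * t ^ (-ν))))
      atTop (nhds 0) := by
    simpa using (tendsto_rpow_neg_atTop (by linarith : (0:ℝ) < ν+1)).mul hA
  have h3 := h1.add h2
  rw [add_zero] at h3
  apply h3.congr'
  filter_upwards [eventually_gt_atTop (0:ℝ)] with t ht
  have e1 : t ^ (-(ν+1)) * t ^ (ν+1) = 1 := by
    rw [← Real.rpow_add ht, show -(ν+1) + (ν+1) = 0 by ring, Real.rpow_zero]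
  linear_combination (F ν x t - x ^ (2*ν) / (2^ν * Real.Gamma (ν+1)) * t ^ (-ν)) * e1

lemma tendsto_tF (ν x : ℝ) (hν : 1 < ν) (hx : 0 ≤ x) :
    Tendsto (fun t : ℝ => t * F ν x t) atTop (nhds 0) := by
  have hA := tendsto_A ν x hν hx
  have h1 : Tendsto (fun t : ℝ =>
      x ^ (2*ν) / (2^ν * Real.Gamma (ν+1)) * t ^ (-(ν-1))) atTop (nhds 0) := by
    simpa using (tendsto_rpow_neg_atTop (by linarith : (0:ℝ) < ν-1)).const_mul
      (x ^ (2*ν) / (2^ν * Real.Gamma (ν+1)))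
  have h2 : Tendsto (fun t : ℝ => t ^ (-ν) *
      (t ^ (ν+1) * (F ν x t - x ^ (2*ν) / (2^ν * Real.Gamma (ν+1)) * t ^ (-ν))))
      atTop (nhds 0) := by
    simpa using (tendsto_rpow_neg_atTop (by linarith : (0:ℝ) < ν)).mul hA
  have h3 := h1.add h2
  rw [add_zero] at h3
  apply h3.congr'
  filter_upwards [eventually_gt_atTop (0:ℝ)] with t ht
  have e1 : t ^ (-(ν-1)) = t * t ^ (-ν) := by
    rw [show -(ν-1) = 1 + -ν by ring, Real.rpow_add ht, Real.rpow_one]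
  have e2 : t ^ (-ν) * t ^ (ν+1) = t := by
    rw [← Real.rpow_add ht, show -ν + (ν+1) = 1 by ring, Real.rpow_one]
  linear_combination (x ^ (2*ν) / (2^ν * Real.Gamma (ν+1))) * e1
    + (F ν x t - x ^ (2*ν) / (2^ν * Real.Gamma (ν+1)) * t ^ (-ν)) * e2

end Stmt16Aux

open Stmt16Aux in
theorem stmt_16 (ν a b : ℝ) (hν : 1 < ν) (hb : 0 ≤ b) (hba : b < a) :
    Tendsto (fun t : ℝ =>
        t ^ (ν + 1) *
          ((F ν a t - F ν b t) / (1 - F ν b t) -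
            ((a ^ (2 * ν) - b ^ (2 * ν)) / (2 ^ ν * Real.Gamma (ν + 1))) / t ^ ν))
      atTop
      (nhds (-(ν * ((a ^ (2 * ν + 2) - b ^ (2 * ν + 2)) /
        (2 ^ (ν + 1) * Real.Gamma (ν + 2)))))) := by
  have ha : 0 ≤ a := hb.trans hba.le
  have hA := tendsto_A ν a hν ha
  have hB := tendsto_A ν b hν hb
  have htF := tendsto_tF ν b hν hb
  have hF := tendsto_F_zero ν b hν hb
  have hq : Tendsto (fun t : ℝ => 1 - F ν b t) atTop (nhds 1) := by
    simpa using tendsto_const_nhds.sub hF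
  have hcomb : Tendsto (fun t : ℝ =>
      (t ^ (ν+1) * (F ν a t - a ^ (2*ν) / (2^ν * Real.Gamma (ν+1)) * t ^ (-ν))
        - t ^ (ν+1) * (F ν b t - b ^ (2*ν) / (2^ν * Real.Gamma (ν+1)) * t ^ (-ν))
        + (a ^ (2*ν) - b ^ (2*ν)) / (2^ν * Real.Gamma (ν+1)) * (t * F ν b t))
        / (1 - F ν b t)) atTop
      (nhds ((-(ν * (a ^ (2*ν+2) / (2^(ν+1) * Real.Gamma (ν+2))))
        - -(ν * (b ^ (2*ν+2) / (2^(ν+1) * Real.Gamma (ν+2))))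
        + (a ^ (2*ν) - b ^ (2*ν)) / (2^ν * Real.Gamma (ν+1)) * 0) / 1)) :=
    ((hA.sub hB).add (tendsto_const_nhds.mul htF)).div hq one_ne_zero
  have hval : (-(ν * (a ^ (2*ν+2) / (2^(ν+1) * Real.Gamma (ν+2))))
        - -(ν * (b ^ (2*ν+2) / (2^(ν+1) * Real.Gamma (ν+2))))
        + (a ^ (2*ν) - b ^ (2*ν)) / (2^ν * Real.Gamma (ν+1)) * 0) / 1
      = -(ν * ((a ^ (2 * ν + 2) - b ^ (2 * ν + 2)) /
        (2 ^ (ν + 1) * Real.Gamma (ν + 2)))) := by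
    rw [sub_div]; ring
  rw [← hval]
  refine Filter.Tendsto.congr' ?_ hcomb
  filter_upwards [eventually_gt_atTop (0:ℝ),
    hF.eventually_lt_const (by norm_num : (0:ℝ) < 1)] with t ht hFb
  have hq0 : (1:ℝ) - F ν b t ≠ 0 := (sub_pos.mpr hFb).ne'
  have htν : (0:ℝ) < t ^ ν := Real.rpow_pos_of_pos ht ν
  have hR : (2:ℝ)^ν * Real.Gamma (ν+1) ≠ 0 := by positivity
  have e1 : t ^ (ν+1) = t ^ ν * t := Real.rpow_add_one ht.ne' ν
  have e2 : t ^ (-ν) = (t ^ ν)⁻¹ := Real.rpow_neg ht.le ν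
  rw [e1, e2]
  field_simp
  ring
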